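/- The hypersurface of revolution obtained by rotating the Angenent oval about the x-axis satisfies κ ≥ λ, where κ is the profile curvature and λ the rotational curvature; explicitly, for every t < 0 and every θ ∈ (π/2, 3π/2), y(θ,t) · √(cos²θ + a(t)²) ≥ −cos θ. -/

import Mathlib

open Real

/-- `a(t) := (e^{-2t} - 1)^{-1/2}` for the Angenent oval. -/
noncomputable def angenentA (t : ℝ) : ℝ := Real.sqrt ((Real.exp (-2 * t) - 1)⁻¹)

/-- The `x`-coordinate of the Angenent oval in the turning angle parametrization. -/
noncomputable def angenentX (θ t : ℝ) : ℝ :=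
  Real.arctan (Real.sin θ / Real.sqrt (Real.cos θ ^ 2 + angenentA t ^ 2))

/-- The `y`-coordinate of the Angenent oval in the turning angle parametrization. -/
noncomputable def angenentY (θ t : ℝ) : ℝ :=
  -t + Real.log ((Real.sqrt (Real.cos θ ^ 2 + angenentA t ^ 2) - Real.cos θ) /
    Real.sqrt (angenentA t ^ 2 + 1))

lemma log_ge (x : ℝ) (hx : 1 ≤ x) : 2 * (x - 1) ≤ (x + 1) * Real.log x := by
  set f : ℝ → ℝ := fun x => (x + 1) * Real.log x - 2 * (x - 1) with hf
  have key : ∀ y ∈ Set.Ici (1:ℝ), 0 ≤ f y := by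
    intro y hy
    have h0 : f 1 = 0 := by simp [hf]
    have hmono : MonotoneOn f (Set.Ici 1) := by
      have hderiv : ∀ z ∈ interior (Set.Ici (1:ℝ)), 0 ≤ deriv f z := by
        intro z hz
        rw [interior_Ici] at hz
        have hz1 : (1:ℝ) < z := hz
        have hz0 : (0:ℝ) < z := by linarith
        have hd : HasDerivAt f (1 * Real.log z + (z + 1) * z⁻¹ - 2 * 1) z := by
          exact (((hasDerivAt_id z).add_const 1).mul (Real.hasDerivAt_log hz0.ne')).sub
            (((hasDerivAt_id z).sub_const 1).const_mul 2)
        rw [hd.deriv]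
        have hlog : 1 - z⁻¹ ≤ Real.log z := by
          have := Real.log_le_sub_one_of_pos (x := z⁻¹) (by positivity)
          rw [Real.log_inv] at this
          linarith
        have : (z + 1) * z⁻¹ = 1 + z⁻¹ := by field_simp
        rw [this]; linarith
      apply monotoneOn_of_deriv_nonneg (convex_Ici 1)
      · exact (ContinuousOn.mul (by fun_prop) (Real.continuousOn_log.mono (by
          intro w hw; simp at hw ⊢; linarith))).sub (by fun_prop)
      · intro z hz
        rw [interior_Ici] at hz
        have hz0 : (0:ℝ) < z := by linarith [(Set.mem_Ioi.mp hz).le]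
        exact (((((hasDerivAt_id z).add_const 1).mul (Real.hasDerivAt_log hz0.ne')).sub
          (((hasDerivAt_id z).sub_const 1).const_mul 2)).differentiableAt).differentiableWithinAt
      · exact hderiv
    have := hmono (Set.self_mem_Ici) hy hy
    rw [h0] at this; exact this
  have := key x hx
  simp only [hf] at this
  linarith
lemma poly_step (a u k : ℝ) (ha : 0 < a) (hu : 0 ≤ u) (hk : 0 ≤ k) (h : k^2 = u^2 + a^2) :
    u * (k + u + a) ≤ 2 * k * (k + u - a) := by
  nlinarith [sq_nonneg (k - a), sq_nonneg (u + a - k), sq_nonneg (k - a - u), mul_nonneg hu hk, sq_nonneg (u - a), mul_nonneg (mul_nonneg hu hu) hk, mul_nonneg hu (sq_nonneg (k-a)), mul_nonneg hk (sq_nonneg (u-a)), mul_nonneg ha.le (sq_nonneg (k - a - u))]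

/-- The hypersurface of revolution obtained by rotating the Angenent oval about the `x`-axis
satisfies `κ ≥ λ`: for every `t < 0` and `θ ∈ (π/2, 3π/2)`,
`y(θ,t) · √(cos²θ + a(t)²) ≥ −cos θ`, i.e. the profile curvature `κ = √(cos²θ + a(t)²)`
dominates the rotational curvature `λ = −cos θ / y(θ,t)`. -/
theorem angenent_revolution_kappa_ge_lambda (t θ : ℝ) (ht : t < 0)
    (hθ : θ ∈ Set.Ioo (π / 2) (3 * π / 2)) :
    -Real.cos θ ≤ angenentY θ t * Real.sqrt (Real.cos θ ^ 2 + angenentA t ^ 2) := by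
  obtain ⟨hθ1, hθ2⟩ := hθ
  have hc : Real.cos θ < 0 := by
    apply Real.cos_neg_of_pi_div_two_lt_of_lt hθ1
    linarith [Real.pi_pos]
  set c := Real.cos θ with hcdef
  set a := angenentA t with hadef
  have hE : (1:ℝ) < Real.exp (-2 * t) := by
    rw [show (1:ℝ) = Real.exp 0 by simp]
    exact Real.exp_lt_exp.mpr (by linarith)
  have hE1 : 0 < Real.exp (-2 * t) - 1 := by linarith
  have ha : 0 < a := Real.sqrt_pos.mpr (inv_pos.mpr hE1)
  have ha2 : a ^ 2 = (Real.exp (-2 * t) - 1)⁻¹ := Real.sq_sqrt (by positivity)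
  set k := Real.sqrt (c ^ 2 + a ^ 2) with hkdef
  have hk0 : 0 < k := Real.sqrt_pos.mpr (by positivity)
  have hk2 : k ^ 2 = c ^ 2 + a ^ 2 := Real.sq_sqrt (by positivity)
  have hka : a ≤ k := by nlinarith [sq_nonneg c]
  -- exp(-t) = sqrt(a^2+1)/a
  have hexp : Real.exp (-t) = Real.sqrt (a ^ 2 + 1) / a := by
    have h1 : Real.exp (-2 * t) = (a ^ 2 + 1) / a ^ 2 := by
      rw [ha2, div_eq_mul_inv, inv_inv, add_mul, inv_mul_cancel₀ hE1.ne']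
      ring
    have h2 : Real.exp (-t) ^ 2 = Real.exp (-2 * t) := by
      rw [← Real.exp_nat_mul]
      ring_nf
    have h3 : (Real.sqrt (a ^ 2 + 1) / a) ^ 2 = (a ^ 2 + 1) / a ^ 2 := by
      rw [div_pow, Real.sq_sqrt (by positivity)]
    have h4 : Real.exp (-t) ^ 2 = (Real.sqrt (a ^ 2 + 1) / a) ^ 2 := by rw [h2, h1, h3]
    have h5 : 0 < Real.sqrt (a ^ 2 + 1) / a := by positivity
    nlinarith [Real.exp_pos (-t)]
  have hmt : -t = Real.log (Real.sqrt (a ^ 2 + 1)) - Real.log a := by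
    have := congrArg Real.log hexp
    rw [Real.log_exp, Real.log_div (by positivity) ha.ne'] at this
    exact this
  have hkc : 0 < k - c := by linarith
  have hY : angenentY θ t = Real.log ((k - c) / a) := by
    rw [angenentY, ← hcdef, ← hadef, ← hkdef, hmt,
      Real.log_div hkc.ne' (by positivity), Real.log_div hkc.ne' ha.ne']
    ring
  -- the log inequality at x = (k - c)/a
  set x := (k - c) / a with hxdef
  have hx1 : 1 ≤ x := by
    rw [hxdef, le_div_iff₀ ha]
    linarith
  have hlog : 2 * (x - 1) ≤ (x + 1) * Real.log x := log_ge x hx1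
  have hpoly : (-c) * (k + (-c) + a) ≤ 2 * k * (k + (-c) - a) :=
    poly_step a (-c) k ha (by linarith) hk0.le (by rw [hk2]; ring)
  -- convert hlog: 2*(k - c - a) ≤ (k - c + a) * log x
  have hlog' : 2 * (k - c - a) ≤ (k - c + a) * Real.log x := by
    have := mul_le_mul_of_nonneg_left hlog ha.le
    have hx1' : x - 1 = (k - c - a) / a := by rw [hxdef]; field_simp
    have hx2' : x + 1 = (k - c + a) / a := by rw [hxdef]; field_simp
    rw [hx1', hx2'] at this
    field_simp at this
    linarith
  have hfin : -c ≤ Real.log x * k := by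
    have h6 : 2 * k * (k - c - a) ≤ k * ((k - c + a) * Real.log x) := by
      have := mul_le_mul_of_nonneg_left hlog' hk0.le
      linarith
    have h7 : (-c) * (k - c + a) ≤ (Real.log x * k) * (k - c + a) := by
      nlinarith [hpoly]
    have hpos : 0 < k - c + a := by linarith
    exact le_of_mul_le_mul_right (by linarith) hpos
  rw [hY]
  exact hfin
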